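/- Let n and ℓ be positive integers and A, B ∈ ℂ^{n×ℓ}. Then d_{U(n)}(A,B)² = ‖A‖² + ‖B‖² − 2‖AB*‖_★. Moreover, there exists a unitary matrix W ∈ U(n) such that WAB* is positive semidefinite Hermitian, and for any such W one has d_{U(n)}(A,B) = ‖WA − B‖. -/

import Mathlib

open Matrix
open scoped ComplexOrder

/-- Frobenius norm of a real matrix: `‖A‖ = √(trace (A Aᵀ))`. -/
noncomputable def frobR {n l : ℕ} (A : Matrix (Fin n) (Fin l) ℝ) : ℝ :=
  Real.sqrt (Matrix.trace (A * Aᵀ))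

/-- Frobenius norm of a complex matrix: `‖A‖ = √(trace (A Aᴴ))`. -/
noncomputable def frobC {n l : ℕ} (A : Matrix (Fin n) (Fin l) ℂ) : ℝ :=
  Real.sqrt (Matrix.trace (A * Aᴴ)).re

open Classical in
/-- The unique positive semidefinite square root of a positive semidefinite real
symmetric matrix (junk value `0` if `M` is not positive semidefinite). -/
noncomputable def matSqrtR {k : ℕ} (M : Matrix (Fin k) (Fin k) ℝ) : Matrix (Fin k) (Fin k) ℝ :=
  if h : M.PosSemidef then h.1.eigenvectorUnitary.1 *
    diagonal (((↑) : ℝ → _) ∘ Real.sqrt ∘ h.1.eigenvalues) *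
    (star h.1.eigenvectorUnitary : Matrix (Fin k) (Fin k) _) else 0

open Classical in
/-- The unique positive semidefinite square root of a positive semidefinite hermitian
matrix (junk value `0` if `M` is not positive semidefinite). -/
noncomputable def matSqrtC {k : ℕ} (M : Matrix (Fin k) (Fin k) ℂ) : Matrix (Fin k) (Fin k) ℂ :=
  if h : M.PosSemidef then h.1.eigenvectorUnitary.1 *
    diagonal (((↑) : ℝ → _) ∘ Real.sqrt ∘ h.1.eigenvalues) *
    (star h.1.eigenvectorUnitary : Matrix (Fin k) (Fin k) _) else 0

/-- Orbit distance for the orthogonal group `O(n)` acting by left multiplication. -/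
noncomputable def dO {n l : ℕ} (A B : Matrix (Fin n) (Fin l) ℝ) : ℝ :=
  sInf {x | ∃ W ∈ Matrix.orthogonalGroup (Fin n) ℝ, x = frobR (W * A - B)}

/-- Orbit distance for the unitary group `U(n)` acting by left multiplication. -/
noncomputable def dU {n l : ℕ} (A B : Matrix (Fin n) (Fin l) ℂ) : ℝ :=
  sInf {x | ∃ W ∈ Matrix.unitaryGroup (Fin n) ℂ, x = frobC (W * A - B)}

/-- `q𝟙ᵀ` : the `n × l` matrix each of whose columns equals `q` (real case). -/
def colMatR {n l : ℕ} (q : Fin n → ℝ) : Matrix (Fin n) (Fin l) ℝ :=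
  Matrix.of fun i _ => q i

/-- `q𝟙ᵀ` : the `n × l` matrix each of whose columns equals `q` (complex case). -/
def colMatC {n l : ℕ} (q : Fin n → ℂ) : Matrix (Fin n) (Fin l) ℂ :=
  Matrix.of fun i _ => q i

/-- Orbit distance for the euclidean group `E(n) = O(n) ⋉ ℝⁿ` acting columnwise. -/
noncomputable def dE {n l : ℕ} (A B : Matrix (Fin n) (Fin l) ℝ) : ℝ :=
  sInf {x | ∃ P ∈ Matrix.orthogonalGroup (Fin n) ℝ, ∃ q : Fin n → ℝ,
    x = frobR (P * A + colMatR q - B)}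

/-- Orbit distance for the complex euclidean group `F(n) = U(n) ⋉ ℂⁿ` acting columnwise. -/
noncomputable def dF {n l : ℕ} (A B : Matrix (Fin n) (Fin l) ℂ) : ℝ :=
  sInf {x | ∃ P ∈ Matrix.unitaryGroup (Fin n) ℂ, ∃ q : Fin n → ℂ,
    x = frobC (P * A + colMatC q - B)}

/-- Column-centering `π` : subtract from each column the average of all columns (real case). -/
noncomputable def centerR {n l : ℕ} (A : Matrix (Fin n) (Fin l) ℝ) : Matrix (Fin n) (Fin l) ℝ :=
  Matrix.of fun i j => A i j - (∑ k, A i k) / (l : ℝ)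

/-- Column-centering `π_ℂ` : subtract from each column the average of all columns (complex case). -/
noncomputable def centerC {n l : ℕ} (A : Matrix (Fin n) (Fin l) ℂ) : Matrix (Fin n) (Fin l) ℂ :=
  Matrix.of fun i j => A i j - (∑ k, A i k) / (l : ℂ)

/-- Nuclear norm `‖M‖_★ = trace √(M M*)`, the sum of the singular values of `M`. -/
noncomputable def nucNorm {k : ℕ} (M : Matrix (Fin k) (Fin k) ℂ) : ℝ :=
  (Matrix.trace (matSqrtC (M * Mᴴ))).re


open scoped MatrixOrder in
lemma matSqrtC_eq_cfc {k : ℕ} {M : Matrix (Fin k) (Fin k) ℂ} (hM : M.PosSemidef) :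
    matSqrtC M = CFC.sqrt M := by
  rw [matSqrtC, dif_pos hM, CFC.sqrt_eq_cfc, cfc_nnreal_eq_real _ M, hM.1.cfc_eq]
  simp only [IsHermitian.cfc, Unitary.conjStarAlgAut_apply]
  congr
  funext x
  by_cases hx : 0 ≤ x
  · rw [Real.coe_sqrt, Real.coe_toNNReal _ hx]
  · rw [Real.sqrt_eq_zero_of_nonpos (le_of_not_ge hx), Real.toNNReal_of_nonpos (le_of_not_ge hx)]
    simp

noncomputable def fsq {n l : ℕ} (X : Matrix (Fin n) (Fin l) ℂ) : ℝ :=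
  (Matrix.trace (X * Xᴴ)).re

lemma fsq_eq_sum {n l : ℕ} (X : Matrix (Fin n) (Fin l) ℂ) :
    fsq X = ∑ i, ∑ j, Complex.normSq (X i j) := by
  have h : Matrix.trace (X * Xᴴ) = ∑ i, ∑ j, ((Complex.normSq (X i j) : ℂ)) := by
    simp [Matrix.trace, Matrix.mul_apply, Matrix.diag, Matrix.conjTranspose_apply,
      Complex.mul_conj]
  rw [fsq, h]
  simp [Complex.ofReal_sum]

lemma fsq_nonneg {n l : ℕ} (X : Matrix (Fin n) (Fin l) ℂ) : 0 ≤ fsq X := by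
  rw [fsq_eq_sum]
  exact Finset.sum_nonneg fun i _ => Finset.sum_nonneg fun j _ => Complex.normSq_nonneg _

lemma frobC_eq {n l : ℕ} (X : Matrix (Fin n) (Fin l) ℂ) : frobC X = Real.sqrt (fsq X) := rfl

lemma frobC_sq {n l : ℕ} (X : Matrix (Fin n) (Fin l) ℂ) : frobC X ^ 2 = fsq X := by
  rw [frobC_eq, Real.sq_sqrt (fsq_nonneg X)]

lemma frobC_nonneg {n l : ℕ} (X : Matrix (Fin n) (Fin l) ℂ) : 0 ≤ frobC X :=
  Real.sqrt_nonneg _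

lemma trace_mul_conjTranspose_re_le {k : ℕ} (X Y : Matrix (Fin k) (Fin k) ℂ) :
    (Matrix.trace (X * Yᴴ)).re ≤ Real.sqrt (fsq X) * Real.sqrt (fsq Y) := by
  set x : EuclideanSpace ℂ (Fin k × Fin k) :=
    WithLp.toLp 2 (fun p : Fin k × Fin k => X p.1 p.2) with hx
  set y : EuclideanSpace ℂ (Fin k × Fin k) :=
    WithLp.toLp 2 (fun p : Fin k × Fin k => Y p.1 p.2) with hy
  have h1 : Matrix.trace (X * Yᴴ) = inner ℂ y x := by
    simp [Matrix.trace, Matrix.mul_apply, Matrix.diag, Matrix.conjTranspose_apply,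
      PiLp.inner_apply, RCLike.inner_apply, Fintype.sum_prod_type, hx, hy, mul_comm]
  have h2 : ‖x‖ = Real.sqrt (fsq X) := by
    rw [EuclideanSpace.norm_eq, fsq_eq_sum]
    congr 1
    rw [Fintype.sum_prod_type]
    simp [hx, Complex.sq_norm]
  have h3 : ‖y‖ = Real.sqrt (fsq Y) := by
    rw [EuclideanSpace.norm_eq, fsq_eq_sum]
    congr 1
    rw [Fintype.sum_prod_type]
    simp [hy, Complex.sq_norm]
  calc (Matrix.trace (X * Yᴴ)).re = (inner ℂ y x : ℂ).re := by rw [h1]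
    _ ≤ ‖(inner ℂ y x : ℂ)‖ := Complex.re_le_norm _
    _ ≤ ‖y‖ * ‖x‖ := norm_inner_le_norm y x
    _ = Real.sqrt (fsq X) * Real.sqrt (fsq Y) := by rw [h2, h3, mul_comm]

lemma fsq_unitary_left {k l : ℕ} (Q : Matrix (Fin k) (Fin k) ℂ)
    (hQ : Q ∈ Matrix.unitaryGroup (Fin k) ℂ) (X : Matrix (Fin k) (Fin l) ℂ) :
    fsq (Q * X) = fsq X := by
  have h : star Q * Q = 1 := (Matrix.mem_unitaryGroup_iff').mp hQ
  rw [Matrix.star_eq_conjTranspose] at h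
  unfold fsq
  rw [Matrix.conjTranspose_mul, Matrix.mul_assoc Q X, Matrix.trace_mul_comm,
    ← Matrix.mul_assoc X Xᴴ, Matrix.mul_assoc (X * Xᴴ), h, Matrix.mul_one]

open scoped MatrixOrder in
lemma trace_unitary_mul_psd_re_le {k : ℕ} (Q P : Matrix (Fin k) (Fin k) ℂ)
    (hQ : Q ∈ Matrix.unitaryGroup (Fin k) ℂ) (hP : P.PosSemidef) :
    (Matrix.trace (Q * P)).re ≤ (Matrix.trace P).re := by
  set S := CFC.sqrt P with hS
  have hSh : Sᴴ = S := (CFC.sqrt_nonneg P).posSemidef.1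
  have hSS : S * S = P := CFC.sqrt_mul_sqrt_self P hP.nonneg
  have key : Matrix.trace (Q * P) = Matrix.trace ((Q * S) * Sᴴ) := by
    rw [hSh, ← hSS, ← mul_assoc]
  rw [key]
  calc (Matrix.trace ((Q * S) * Sᴴ)).re
      ≤ Real.sqrt (fsq (Q * S)) * Real.sqrt (fsq S) := trace_mul_conjTranspose_re_le _ _
    _ = Real.sqrt (fsq S) * Real.sqrt (fsq S) := by rw [fsq_unitary_left Q hQ S]
    _ = fsq S := Real.mul_self_sqrt (fsq_nonneg S)
    _ = (Matrix.trace P).re := by rw [fsq, hSh, hSS]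

lemma fsq_expand {n l : ℕ} (W : Matrix (Fin n) (Fin n) ℂ)
    (hW : W ∈ Matrix.unitaryGroup (Fin n) ℂ) (A B : Matrix (Fin n) (Fin l) ℂ) :
    fsq (W * A - B) = fsq A + fsq B - 2 * (Matrix.trace (W * (A * Bᴴ))).re := by
  have hW' : Wᴴ * W = 1 := by
    have := (Matrix.mem_unitaryGroup_iff').mp hW
    rwa [Matrix.star_eq_conjTranspose] at this
  have e1 : (W * A - B) * (W * A - B)ᴴ =
      (W * A) * (W * A)ᴴ - (W * A) * Bᴴ - (B * (W * A)ᴴ - B * Bᴴ) := by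
    rw [Matrix.conjTranspose_sub, Matrix.sub_mul, Matrix.mul_sub, Matrix.mul_sub]
  have t1 : Matrix.trace ((W * A) * (W * A)ᴴ) = Matrix.trace (A * Aᴴ) := by
    rw [Matrix.conjTranspose_mul, Matrix.mul_assoc W A, Matrix.trace_mul_comm,
      ← Matrix.mul_assoc A Aᴴ, Matrix.mul_assoc (A * Aᴴ), hW', Matrix.mul_one]
  have t2 : (W * A) * Bᴴ = W * (A * Bᴴ) := Matrix.mul_assoc W A Bᴴ
  have e2 : (W * (A * Bᴴ))ᴴ = B * (W * A)ᴴ := by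
    rw [Matrix.conjTranspose_mul W, Matrix.conjTranspose_mul A,
      Matrix.conjTranspose_conjTranspose, Matrix.mul_assoc, Matrix.conjTranspose_mul W A]
  have t3 : Matrix.trace (B * (W * A)ᴴ) = star (Matrix.trace (W * (A * Bᴴ))) := by
    rw [← e2, Matrix.trace_conjTranspose]
  unfold fsq
  rw [e1, Matrix.trace_sub, Matrix.trace_sub, Matrix.trace_sub, t1, t2, t3]
  simp only [Complex.sub_re, Complex.add_re, Complex.star_def, Complex.conj_re]
  ring

open scoped MatrixOrder in
lemma nuc_of_psd {k : ℕ} (M W : Matrix (Fin k) (Fin k) ℂ)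
    (hW : W ∈ Matrix.unitaryGroup (Fin k) ℂ) (hP : (W * M).PosSemidef) :
    nucNorm M = (Matrix.trace (W * M)).re := by
  have hWW : W * Wᴴ = 1 := by
    have := (Matrix.mem_unitaryGroup_iff).mp hW
    rwa [Matrix.star_eq_conjTranspose] at this
  have hW'W : Wᴴ * W = 1 := by
    have := (Matrix.mem_unitaryGroup_iff').mp hW
    rwa [Matrix.star_eq_conjTranspose] at this
  set P := W * M with hPdef
  have hPh : Pᴴ = P := hP.1
  have hM : M = Wᴴ * P := by
    rw [hPdef, ← Matrix.mul_assoc, hW'W, Matrix.one_mul]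
  have hMM : (M * Mᴴ).PosSemidef := Matrix.posSemidef_self_mul_conjTranspose M
  have hSpsd : (Wᴴ * P * W).PosSemidef := hP.conjTranspose_mul_mul_same W
  have hsq : (Wᴴ * P * W) ^ 2 = M * Mᴴ := by
    have h1 : (Wᴴ * P * W) * (Wᴴ * P * W) = Wᴴ * P * (P * W) := by
      rw [Matrix.mul_assoc (Wᴴ * P) W, ← Matrix.mul_assoc W (Wᴴ * P) W,
        ← Matrix.mul_assoc W Wᴴ P, hWW, Matrix.one_mul]
    have h2 : M * Mᴴ = Wᴴ * P * (P * W) := by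
      rw [hM, Matrix.conjTranspose_mul, Matrix.conjTranspose_conjTranspose, hPh,
        Matrix.mul_assoc Wᴴ P]
    rw [pow_two, h1, h2]
  have hsqrt : Wᴴ * P * W = CFC.sqrt (M * Mᴴ) :=
    (CFC.sqrt_unique (by rw [← pow_two]; exact hsq) hSpsd.nonneg).symm
  have : matSqrtC (M * Mᴴ) = Wᴴ * P * W := by
    rw [matSqrtC_eq_cfc hMM, ← hsqrt]
  rw [nucNorm, this, Matrix.mul_assoc, Matrix.trace_mul_comm, Matrix.mul_assoc,
    hWW, Matrix.mul_one]

lemma exists_polar {k : ℕ} (M : Matrix (Fin k) (Fin k) ℂ) :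
    ∃ W ∈ Matrix.unitaryGroup (Fin k) ℂ, (W * M).PosSemidef := by
  classical
  have hH : (Mᴴ * M).PosSemidef := Matrix.posSemidef_conjTranspose_mul_self M
  have herm : (Mᴴ * M).IsHermitian := hH.1
  set lam := herm.eigenvalues with hlamdef
  set v := herm.eigenvectorBasis with hvdef
  have hlam0 : ∀ i, 0 ≤ lam i := hH.eigenvalues_nonneg
  have hvec : ∀ j, (Mᴴ * M) *ᵥ ⇑(v j) = lam j • ⇑(v j) := herm.mulVec_eigenvectorBasis
  set w : Fin k → EuclideanSpace ℂ (Fin k) := fun j => WithLp.toLp 2 (M *ᵥ ⇑(v j)) with hwdef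
  have hinner : ∀ i j, (inner ℂ (w i) (w j) : ℂ) = (lam j : ℂ) * inner ℂ (v i) (v j) := by
    intro i j
    have h1 : (inner ℂ (w i) (w j) : ℂ) = star (M *ᵥ ⇑(v i)) ⬝ᵥ (M *ᵥ ⇑(v j)) := by
      simp [PiLp.inner_apply, RCLike.inner_apply, dotProduct, hwdef, mul_comm]
    have h2 : (inner ℂ (v i) (v j) : ℂ) = star ⇑(v i) ⬝ᵥ ⇑(v j) := by
      simp [PiLp.inner_apply, RCLike.inner_apply, dotProduct, mul_comm]
    rw [h1, Matrix.star_mulVec, Matrix.dotProduct_mulVec, Matrix.vecMul_vecMul,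
      ← Matrix.dotProduct_mulVec, hvec j, dotProduct_smul, h2, Complex.real_smul]
  have horth : ∀ i j, (inner ℂ (w i) (w j) : ℂ) = if i = j then (lam j : ℂ) else 0 := by
    intro i j
    rw [hinner i j, orthonormal_iff_ite.mp v.orthonormal i j]
    by_cases h : i = j <;> simp [h]
  have hw0 : ∀ j, lam j = 0 → w j = 0 := by
    intro j hj
    have := horth j j
    rw [if_pos rfl, hj] at this
    exact inner_self_eq_zero.mp (by exact_mod_cast this)
  set u : Fin k → EuclideanSpace ℂ (Fin k) :=
    fun j => ((Real.sqrt (lam j) : ℂ))⁻¹ • w j with hudef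
  have huon : Orthonormal ℂ (Set.restrict {j | lam j ≠ 0} u) := by
    rw [orthonormal_iff_ite]
    rintro ⟨i, hi⟩ ⟨j, hj⟩
    simp only [Set.restrict_apply, hudef]
    show inner ℂ (((Real.sqrt (lam i) : ℂ))⁻¹ • w i) (((Real.sqrt (lam j) : ℂ))⁻¹ • w j) = _
    rw [inner_smul_left, inner_smul_right, horth i j, map_inv₀, Complex.conj_ofReal]
    by_cases h : i = j
    · subst h
      rw [if_pos rfl, if_pos rfl]
      have hpos : 0 < lam i := lt_of_le_of_ne (hlam0 i) (Ne.symm hi)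
      have hs : Real.sqrt (lam i) ≠ 0 := by positivity
      have hsc : ((Real.sqrt (lam i) : ℝ) : ℂ) ≠ 0 := by exact_mod_cast hs
      field_simp
      norm_cast
      rw [Real.sq_sqrt (hlam0 i)]
    · rw [if_neg h, if_neg (by simpa [Subtype.ext_iff] using h)]
      ring
  obtain ⟨b, hb⟩ := huon.exists_orthonormalBasis_extension_of_card_eq
    (by simp : Module.finrank ℂ (EuclideanSpace ℂ (Fin k)) = Fintype.card (Fin k))
  set U : Matrix (Fin k) (Fin k) ℂ :=
    (EuclideanSpace.basisFun (Fin k) ℂ).toBasis.toMatrix b.toBasis with hUdef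
  have hUmem : U ∈ Matrix.unitaryGroup (Fin k) ℂ :=
    (EuclideanSpace.basisFun (Fin k) ℂ).toMatrix_orthonormalBasis_mem_unitary b
  have hUapp : ∀ i j, U i j = b j i := fun i j => rfl
  set V : Matrix (Fin k) (Fin k) ℂ := (herm.eigenvectorUnitary : Matrix (Fin k) (Fin k) ℂ)
    with hVdef
  have hVmem : V ∈ Matrix.unitaryGroup (Fin k) ℂ := herm.eigenvectorUnitary.2
  have hVapp : ∀ i j, V i j = v j i := fun i j => rfl
  set D : Matrix (Fin k) (Fin k) ℂ :=
    Matrix.diagonal (fun j => (Real.sqrt (lam j) : ℂ)) with hDdef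
  have hDpsd : D.PosSemidef := Matrix.posSemidef_diagonal_iff.mpr fun i =>
    Complex.zero_le_real.mpr (Real.sqrt_nonneg _)
  have hMV : M * V = U * D := by
    ext i j
    have lhs : (M * V) i j = w j i := by
      simp [Matrix.mul_apply, Matrix.mulVec, dotProduct, hVapp, hwdef]
    have rhs : (U * D) i j = b j i * (Real.sqrt (lam j) : ℂ) := by
      simp [hDdef, Matrix.mul_diagonal, hUapp]
    rw [lhs, rhs]
    by_cases hj : lam j = 0
    · rw [hw0 j hj, hj]
      simp
    · rw [hb j hj, hudef]
      have hs : ((Real.sqrt (lam j) : ℝ) : ℂ) ≠ 0 := by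
        have hpos : 0 < lam j := lt_of_le_of_ne (hlam0 j) (Ne.symm hj)
        have : Real.sqrt (lam j) ≠ 0 := by positivity
        exact_mod_cast this
      simp only [PiLp.smul_apply, smul_eq_mul]
      field_simp
  have hVV : V * Vᴴ = 1 := by
    have := (Matrix.mem_unitaryGroup_iff).mp hVmem
    rwa [Matrix.star_eq_conjTranspose] at this
  have hU'U : Uᴴ * U = 1 := by
    have := (Matrix.mem_unitaryGroup_iff').mp hUmem
    rwa [Matrix.star_eq_conjTranspose] at this
  have hM : M = U * D * Vᴴ := by
    calc M = M * (V * Vᴴ) := by rw [hVV, Matrix.mul_one]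
    _ = (M * V) * Vᴴ := by rw [Matrix.mul_assoc]
    _ = U * D * Vᴴ := by rw [hMV]
  refine ⟨V * Uᴴ, ?_, ?_⟩
  · have hUH : Uᴴ ∈ Matrix.unitaryGroup (Fin k) ℂ := by
      rw [Matrix.mem_unitaryGroup_iff, Matrix.star_eq_conjTranspose,
        Matrix.conjTranspose_conjTranspose]
      exact hU'U
    exact mul_mem hVmem hUH
  · have key : V * Uᴴ * M = V * D * Vᴴ := by
      rw [hM, Matrix.mul_assoc V Uᴴ, Matrix.mul_assoc U D Vᴴ,
        ← Matrix.mul_assoc Uᴴ U (D * Vᴴ), hU'U, Matrix.one_mul, ← Matrix.mul_assoc V D Vᴴ]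
    rw [key]
    exact hDpsd.mul_mul_conjTranspose_same V

/-- Lemma: `d_{U(n)}(A,B)² = ‖A‖² + ‖B‖² − 2‖AB*‖_★`; there exists `W ∈ U(n)` with
`WAB*` positive semidefinite hermitian, and for any such `W`, `d_{U(n)}(A,B) = ‖WA − B‖`. -/
theorem stmt11 (n l : ℕ) (hn : 0 < n) (hl : 0 < l) (A B : Matrix (Fin n) (Fin l) ℂ) :
    dU A B ^ 2 = frobC A ^ 2 + frobC B ^ 2 - 2 * nucNorm (A * Bᴴ) ∧
      (∃ W ∈ Matrix.unitaryGroup (Fin n) ℂ, (W * (A * Bᴴ)).PosSemidef) ∧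
      ∀ W ∈ Matrix.unitaryGroup (Fin n) ℂ, (W * (A * Bᴴ)).PosSemidef →
        dU A B = frobC (W * A - B) := by
  classical
  set M := A * Bᴴ with hMdef
  obtain ⟨W₀, hW₀, hP₀⟩ := exists_polar M
  have hnuc : nucNorm M = (Matrix.trace (W₀ * M)).re := nuc_of_psd M W₀ hW₀ hP₀
  have hMrec : M = W₀ᴴ * (W₀ * M) := by
    have h := (Matrix.mem_unitaryGroup_iff').mp hW₀
    rw [Matrix.star_eq_conjTranspose] at h
    rw [← Matrix.mul_assoc, h, Matrix.one_mul]
  have hbound : ∀ W ∈ Matrix.unitaryGroup (Fin n) ℂ,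
      (Matrix.trace (W * M)).re ≤ nucNorm M := by
    intro W hW
    have hW₀H : W₀ᴴ ∈ Matrix.unitaryGroup (Fin n) ℂ := by
      rw [Matrix.mem_unitaryGroup_iff, Matrix.star_eq_conjTranspose,
        Matrix.conjTranspose_conjTranspose]
      have h := (Matrix.mem_unitaryGroup_iff').mp hW₀
      rwa [Matrix.star_eq_conjTranspose] at h
    have hQ : W * W₀ᴴ ∈ Matrix.unitaryGroup (Fin n) ℂ := mul_mem hW hW₀H
    calc (Matrix.trace (W * M)).re
        = (Matrix.trace ((W * W₀ᴴ) * (W₀ * M))).re := by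
          conv_lhs => rw [hMrec, ← Matrix.mul_assoc]
      _ ≤ (Matrix.trace (W₀ * M)).re := trace_unitary_mul_psd_re_le _ _ hQ hP₀
      _ = nucNorm M := hnuc.symm
  set c := fsq A + fsq B - 2 * nucNorm M with hc
  have hW₀c : fsq (W₀ * A - B) = c := by
    rw [fsq_expand W₀ hW₀ A B, hc, hnuc]
  have hc0 : 0 ≤ c := hW₀c ▸ fsq_nonneg _
  have hleast : IsLeast {x | ∃ W ∈ Matrix.unitaryGroup (Fin n) ℂ, x = frobC (W * A - B)}
      (Real.sqrt c) := by
    constructor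
    · exact ⟨W₀, hW₀, by rw [frobC_eq, hW₀c]⟩
    · rintro x ⟨W, hW, rfl⟩
      rw [frobC_eq]
      apply Real.sqrt_le_sqrt
      have := hbound W hW
      rw [fsq_expand W hW A B, hc]
      linarith
  have hdU : dU A B = Real.sqrt c := hleast.csInf_eq
  refine ⟨?_, ⟨W₀, hW₀, hP₀⟩, ?_⟩
  · rw [hdU, Real.sq_sqrt hc0, hc, ← frobC_sq, ← frobC_sq, hMdef]
  · intro W hW hPSD
    have h2 : nucNorm M = (Matrix.trace (W * M)).re := nuc_of_psd M W hW hPSD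
    rw [hdU, frobC_eq]
    congr 1
    rw [fsq_expand W hW A B, hc, h2]
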